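/- Let k be a field and f ∈ k[x_1,…,x_n] a nonconstant polynomial. Then there exist natural numbers N_1,…,N_{n-1} such that the k-algebra automorphism of k[x_1,…,x_n] sending x_i ↦ x_i + x_n^{N_i} for i < n and x_n ↦ x_n maps f to a polynomial which is, up to a nonzero scalar, monic in x_n with coefficients in k[x_1,…,x_{n-1}]. -/

import Mathlib

open MvPolynomial

/-- Uniqueness of base-`r` digit representations. -/
lemma digits_inj (r : ℕ) : ∀ (m : ℕ) (g h : Fin m → ℕ), (∀ j, g j < r) → (∀ j, h j < r) →
    (∑ j, g j * r ^ (j : ℕ)) = (∑ j, h j * r ^ (j : ℕ)) → g = h := by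
  intro m
  induction m with
  | zero => intro g h _ _ _; funext j; exact j.elim0
  | succ m ih =>
    intro g h hg hh he
    have hr : 0 < r := lt_of_le_of_lt (Nat.zero_le _) (hg 0)
    rw [Fin.sum_univ_succ, Fin.sum_univ_succ] at he
    simp only [Fin.val_zero, pow_zero, mul_one, Fin.val_succ, pow_succ] at he
    have h1 : ∀ u : Fin m → ℕ,
        (∑ i : Fin m, u i * (r ^ (i : ℕ) * r)) = (∑ i : Fin m, u i * r ^ (i : ℕ)) * r := by
      intro u; rw [Finset.sum_mul]; exact Finset.sum_congr rfl fun i _ => by ring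
    rw [h1, h1] at he
    have h0 : g 0 = h 0 := by
      have := congrArg (· % r) he
      simp only [Nat.add_mul_mod_self_right, Nat.mod_eq_of_lt (hg 0),
        Nat.mod_eq_of_lt (hh 0)] at this
      exact this
    have htail : (fun i : Fin m => g i.succ) = fun i : Fin m => h i.succ := by
      apply ih _ _ (fun j => hg j.succ) (fun j => hh j.succ)
      have : (∑ i : Fin m, g i.succ * r ^ (i : ℕ)) * r
          = (∑ i : Fin m, h i.succ * r ^ (i : ℕ)) * r := by omega
      exact Nat.eq_of_mul_eq_mul_right hr this
    funext j
    refine Fin.cases h0 (fun i => ?_) j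
    exact congrFun htail i

theorem unfolding_stmt0 (k : Type*) [Field k] (n : ℕ)
    (f : MvPolynomial (Fin (n + 1)) k) (hf : ∀ c : k, f ≠ C c) :
    ∃ (N : Fin n → ℕ)
      (σ : MvPolynomial (Fin (n + 1)) k ≃ₐ[k] MvPolynomial (Fin (n + 1)) k),
      σ (X 0) = X 0 ∧
      (∀ i : Fin n, σ (X i.succ) = X i.succ + (X 0) ^ N i) ∧
      ∃ c : k, c ≠ 0 ∧ (finSuccEquiv k n (σ f)).leadingCoeff = C c := by
  classical
  have hf0 : f ≠ 0 := by simpa using hf 0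
  set r : ℕ := f.totalDegree + 1 with hr
  have hrpos : 0 < r := Nat.succ_pos _
  set N : Fin n → ℕ := fun i => r ^ ((i : ℕ) + 1) with hN
  have hNpos : ∀ i, 0 < N i := fun i => pow_pos hrpos _
  -- the automorphism
  set F : MvPolynomial (Fin (n + 1)) k →ₐ[k] MvPolynomial (Fin (n + 1)) k :=
    aeval (fun j => Fin.cases (X 0) (fun i => X i.succ + X 0 ^ N i) j) with hF
  set B : MvPolynomial (Fin (n + 1)) k →ₐ[k] MvPolynomial (Fin (n + 1)) k :=
    aeval (fun j => Fin.cases (X 0) (fun i => X i.succ - X 0 ^ N i) j) with hB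
  have hFB : F.comp B = AlgHom.id k _ := by
    apply MvPolynomial.algHom_ext
    intro j
    refine Fin.cases ?_ (fun i => ?_) j <;>
      simp [hF, hB]
  have hBF : B.comp F = AlgHom.id k _ := by
    apply MvPolynomial.algHom_ext
    intro j
    refine Fin.cases ?_ (fun i => ?_) j <;>
      simp [hF, hB]
  set σ : MvPolynomial (Fin (n + 1)) k ≃ₐ[k] MvPolynomial (Fin (n + 1)) k :=
    AlgEquiv.ofAlgHom F B hFB hBF with hσ
  -- the images of the variables in the polynomial ring
  set g : Fin (n + 1) → Polynomial (MvPolynomial (Fin n) k) :=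
    fun j => Fin.cases Polynomial.X
      (fun i => Polynomial.X ^ N i + Polynomial.C (X i)) j with hg
  have hgmonic : ∀ j, (g j).Monic := by
    intro j
    refine Fin.cases ?_ (fun i => ?_) j
    · simpa [hg] using Polynomial.monic_X
    · simp only [hg, Fin.cases_succ]
      exact Polynomial.monic_X_pow_add
        (lt_of_le_of_lt Polynomial.degree_C_le (by exact_mod_cast hNpos i))
  have hgdeg : ∀ j : Fin (n + 1), (g j).natDegree = r ^ (j : ℕ) := by
    intro j
    refine Fin.cases ?_ (fun i => ?_) j
    · simp [hg]
    · simp [hg, Polynomial.natDegree_X_pow_add_C, hN]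
  -- key: finSuccEquiv ∘ σ = aeval g
  have hkey : ∀ p, finSuccEquiv k n (σ p) = aeval g p := by
    have : ((finSuccEquiv k n : MvPolynomial (Fin (n + 1)) k →ₐ[k]
        Polynomial (MvPolynomial (Fin n) k)).comp F) = aeval g := by
      apply MvPolynomial.algHom_ext
      intro j
      refine Fin.cases ?_ (fun i => ?_) j
      · simp [hF, hg, finSuccEquiv_X_zero]
      · simp [hF, hg, finSuccEquiv_X_zero, finSuccEquiv_X_succ, add_comm]
    intro p
    have := congrFun (congrArg DFunLike.coe this) p
    simpa [hσ] using this
  -- degrees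
  set e : (Fin (n + 1) →₀ ℕ) → ℕ := fun d => ∑ j, d j * r ^ (j : ℕ) with he
  set P : (Fin (n + 1) →₀ ℕ) → Polynomial (MvPolynomial (Fin n) k) :=
    fun d => ∏ j, g j ^ d j with hP
  have hPmonic : ∀ d, (P d).Monic := fun d =>
    Polynomial.monic_prod_of_monic _ _ fun j _ => (hgmonic j).pow _
  have hPdeg : ∀ d, (P d).natDegree = e d := by
    intro d
    rw [hP]
    rw [Polynomial.natDegree_prod_of_monic _ _ fun j _ => (hgmonic j).pow _]
    exact Finset.sum_congr rfl fun j _ => by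
      rw [Polynomial.natDegree_pow, hgdeg, mul_comm]
  have hsum : aeval g f
      = ∑ d ∈ f.support, Polynomial.C (MvPolynomial.C (coeff d f)) * P d := by
    conv_lhs => rw [f.as_sum]
    rw [map_sum]
    refine Finset.sum_congr rfl fun d _ => ?_
    rw [aeval_monomial, Finsupp.prod_pow, hP]
    congr 1
  -- the maximum
  obtain ⟨d₀, hd₀mem, hd₀max⟩ :=
    f.support.exists_max_image e (Finset.nonempty_iff_ne_empty.mpr (mt MvPolynomial.support_eq_empty.mp hf0))
  have hdigits : ∀ d ∈ f.support, ∀ j, d j < r := by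
    intro d hd j
    have hj : d j ≤ d.sum fun _ e => e := by
      by_cases h : j ∈ d.support
      · exact Finset.single_le_sum (fun _ _ => Nat.zero_le _) h
      · simp [Finsupp.notMem_support_iff.mp h]
    exact lt_of_le_of_lt (hj.trans (le_totalDegree hd)) (Nat.lt_succ_self _)
  have hinj : ∀ d ∈ f.support, e d = e d₀ → d = d₀ := by
    intro d hd hde
    have := digits_inj r (n + 1) (fun j => d j) (fun j => d₀ j)
      (hdigits d hd) (hdigits d₀ hd₀mem) hde
    exact Finsupp.ext fun j => congrFun this j
  have hc0 : coeff d₀ f ≠ 0 := mem_support_iff.mp hd₀mem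
  -- coefficient at e d₀
  set q := aeval g f with hq
  have hcoeff : q.coeff (e d₀) = MvPolynomial.C (coeff d₀ f) := by
    rw [hsum, Polynomial.finset_sum_coeff]
    rw [Finset.sum_eq_single d₀]
    · rw [Polynomial.coeff_C_mul]
      have : (P d₀).coeff (e d₀) = 1 := by
        rw [← hPdeg d₀]
        exact (hPmonic d₀)
      rw [this, mul_one]
    · intro d hd hne
      rw [Polynomial.coeff_C_mul]
      have hlt : (P d).natDegree < e d₀ := by
        rw [hPdeg]
        exact lt_of_le_of_ne (hd₀max d hd) fun h => hne (hinj d hd h)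
      rw [Polynomial.coeff_eq_zero_of_natDegree_lt hlt, mul_zero]
    · intro h; exact absurd hd₀mem h
  have hcoeffne : q.coeff (e d₀) ≠ 0 := by
    rw [hcoeff]
    simpa using hc0
  have hdegle : q.natDegree ≤ e d₀ := by
    rw [hsum]
    apply Polynomial.natDegree_sum_le_of_forall_le
    intro d hd
    exact le_trans (Polynomial.natDegree_C_mul_le _ _)
      (le_of_eq (hPdeg d) |>.trans (hd₀max d hd))
  have hdeg : q.natDegree = e d₀ :=
    le_antisymm hdegle (Polynomial.le_natDegree_of_ne_zero hcoeffne)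
  refine ⟨N, σ, ?_, ?_, coeff d₀ f, hc0, ?_⟩
  · simp [hσ, hF]
  · intro i; simp [hσ, hF]
  · rw [hkey, ← hq, Polynomial.leadingCoeff, hdeg, hcoeff]
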